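/- arXiv:2106.06679 — 5 statements merged into one kernel-verified Lean document; each statement's English description precedes it below -/
import Mathlib

section
/- If the quiddity sequence of a frieze pattern (over ℝ) contains p−1 consecutive entries equal to λ_p = 2·cos(π/p) for some integer p ≥ 3, say m_{0,2} = m_{1,3} = ⋯ = m_{p−2,p} = λ_p, then m_{0,p} = 0. Consequently such a sequence cannot be the quiddity sequence of an infinite frieze pattern all of whose entries beyond the boundary rows are positive. -/
open Real

noncomputable def chebAux : ℕ → ℝ → ℝ
  | 0, _ => 0
  | 1, _ => 1
  | n + 2, x => x * chebAux (n + 1) x - chebAux n x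

/-- Normalized Chebyshev polynomial of the second kind: `chebU k x = U_k(x)` with
`U_{-1} = 0`, `U_0 = 1`, `U_k(x) = x·U_{k-1}(x) − U_{k-2}(x)`, extended to all
integer indices via `U_{-k-2} = -U_k`. -/
noncomputable def chebU (k : ℤ) (x : ℝ) : ℝ :=
  if 0 ≤ k + 1 then chebAux (k + 1).toNat x else -chebAux (-(k + 1)).toNat x

lemma chebAux_sin (θ : ℝ) : ∀ n : ℕ, chebAux n (2 * Real.cos θ) * Real.sin θ = Real.sin (n * θ) := by
  intro n
  induction n using Nat.twoStepInduction with
  | zero => simp [chebAux]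
  | one => simp [chebAux]
  | more n ih2 ih1 =>
    have e : chebAux (n + 2) (2 * Real.cos θ) =
        2 * Real.cos θ * chebAux (n + 1) (2 * Real.cos θ) - chebAux n (2 * Real.cos θ) := rfl
    have h2 : ((n + 2 : ℕ) : ℝ) * θ = ((n + 1 : ℕ) : ℝ) * θ + θ := by push_cast; ring
    have h1' : ((n : ℕ) : ℝ) * θ = ((n + 1 : ℕ) : ℝ) * θ - θ := by push_cast; ring
    rw [e, h2, Real.sin_add]
    rw [h1', Real.sin_sub] at ih2
    linear_combination 2 * Real.cos θ * ih1 - ih2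

/-- If a quiddity sequence has p−1 consecutive entries lambda_p, then m_{0,p} = 0, so it
cannot be the quiddity sequence of an infinite frieze pattern with all positive entries
beyond the boundary rows. -/
theorem too_many_lambda_p (p : ℤ) (hp : 3 ≤ p) (m : ℤ → ℤ → ℝ)
    (h0 : ∀ i : ℤ, m i i = 0) (h1 : ∀ i : ℤ, m i (i + 1) = 1)
    (hrec : ∀ i j : ℤ, i + 2 ≤ j → m i j = m i (i + 2) * m (i + 1) j - m (i + 2) j)
    (hq : ∀ i : ℤ, 0 ≤ i → i ≤ p - 2 → m i (i + 2) = 2 * Real.cos (Real.pi / p)) :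
    m 0 p = 0 ∧ ¬ (∀ i j : ℤ, i + 2 ≤ j → 0 < m i j) := by
  set θ := Real.pi / p with hθ
  set lam := 2 * Real.cos θ with hlam
  have key : ∀ n : ℕ, (n : ℤ) ≤ p → m (p - n) p = chebAux n lam := by
    intro n
    induction n using Nat.twoStepInduction with
    | zero => intro _; simpa [chebAux] using h0 p
    | one =>
      intro _
      have := h1 (p - 1)
      simpa [chebAux, sub_add_cancel] using this
    | more n ih2 ih1 =>
      intro hn
      have hn1 : ((n : ℤ) + 1) ≤ p := by push_cast at hn ⊢; omega
      have hn0 : ((n : ℤ)) ≤ p := by omega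
      have hrec' := hrec (p - (n + 2 : ℕ)) p (by push_cast; omega)
      have hq' := hq (p - (n + 2 : ℕ)) (by push_cast at hn ⊢; omega) (by push_cast; omega)
      have e1 : p - (n + 2 : ℕ) + 2 = p - (n : ℤ) := by push_cast; ring
      have e2 : p - (n + 2 : ℕ) + 1 = p - ((n : ℤ) + 1) := by push_cast; ring
      rw [e1] at hrec' hq'
      rw [e2] at hrec'
      have c1 : m (p - ((n : ℤ) + 1)) p = chebAux (n + 1) lam := by
        have := ih1 (by push_cast; omega)
        simpa using this
      have c2 : m (p - (n : ℤ)) p = chebAux n lam := by simpa using ih2 hn0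
      rw [hrec', hq', c1, c2]
      rfl
  have hpR : (0 : ℝ) < p := by exact_mod_cast (by omega : (0 : ℤ) < p)
  have hθpos : 0 < θ := div_pos Real.pi_pos hpR
  have hθlt : θ < Real.pi := by
    rw [hθ, div_lt_iff₀ hpR]
    nlinarith [Real.pi_pos, (by exact_mod_cast hp : (3 : ℝ) ≤ (p : ℝ))]
  have hsin : 0 < Real.sin θ := Real.sin_pos_of_pos_of_lt_pi hθpos hθlt
  have hm0 : m 0 p = 0 := by
    have hk := key p.toNat (by omega)
    have : p - (p.toNat : ℤ) = 0 := by omega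
    rw [this] at hk
    have hs := chebAux_sin θ p.toNat
    have : ((p.toNat : ℕ) : ℝ) * θ = Real.pi := by
      rw [hθ]
      have : ((p.toNat : ℕ) : ℝ) = (p : ℝ) := by exact_mod_cast (by omega : ((p.toNat : ℤ)) = p)
      rw [this]
      field_simp
    rw [this, Real.sin_pi] at hs
    have : chebAux p.toNat lam = 0 := by
      rcases mul_eq_zero.mp hs with h | h
      · exact h
      · exact absurd h (ne_of_gt hsin)
    rw [hk, this]
  refine ⟨hm0, fun hpos => ?_⟩
  have := hpos 0 p (by omega)
  rw [hm0] at this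
  exact lt_irrefl 0 this
end

section
/- Positivity from quiddity bound: if (m_{i,j}) is an infinite frieze pattern over ℝ with all quiddity entries m_{i,i+2} ≥ 2, then m_{i,j} > 0 for all j > i; moreover m_{i,j} ≥ m_{i,j−1} for all j ≥ i+1 (the diagonals are weakly increasing). -/
open Real

lemma quiddity_key (m : ℤ → ℤ → ℝ)
    (h0 : ∀ i : ℤ, m i i = 0) (h1 : ∀ i : ℤ, m i (i + 1) = 1)
    (hrec : ∀ i j : ℤ, i + 2 ≤ j → m i j = m (j - 2) j * m i (j - 1) - m i (j - 2))
    (hq : ∀ i : ℤ, 2 ≤ m i (i + 2)) :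
    ∀ n : ℕ, ∀ i : ℤ, 1 ≤ m i (i + (n + 1)) ∧ m i (i + n) ≤ m i (i + (n + 1)) := by
  intro n
  induction n with
  | zero =>
    intro i
    simp only [Nat.cast_zero, zero_add, add_zero]
    rw [h0, h1]
    norm_num
  | succ n ih =>
    intro i
    obtain ⟨ha1, hba⟩ := ih i
    have hj : i + 2 ≤ i + ((n : ℤ) + 1 + 1) := by omega
    have hr := hrec i (i + ((n : ℤ) + 1 + 1)) hj
    have e1 : i + ((n : ℤ) + 1 + 1) - 2 = i + n := by ring
    have e2 : i + ((n : ℤ) + 1 + 1) - 1 = i + (n + 1) := by ring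
    have e3 : i + (n : ℤ) + 2 = i + ((n : ℤ) + 1 + 1) := by ring
    rw [e1, e2] at hr
    have hq' := hq (i + n)
    rw [e3] at hq'
    push_cast
    constructor
    · rw [hr]; nlinarith
    · rw [hr]; nlinarith

/-- Positivity from quiddity bound: if all quiddity entries are ≥ 2, then all entries
m_{i,j} with j > i are positive and the diagonals are weakly increasing. -/
theorem quiddity_ge_two_positive (m : ℤ → ℤ → ℝ)
    (h0 : ∀ i : ℤ, m i i = 0) (h1 : ∀ i : ℤ, m i (i + 1) = 1)
    (hrec : ∀ i j : ℤ, i + 2 ≤ j → m i j = m (j - 2) j * m i (j - 1) - m i (j - 2))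
    (hq : ∀ i : ℤ, 2 ≤ m i (i + 2)) :
    (∀ i j : ℤ, i < j → 0 < m i j) ∧ (∀ i j : ℤ, i + 1 ≤ j → m i (j - 1) ≤ m i j) := by
  have key := quiddity_key m h0 h1 hrec hq
  constructor
  · intro i j hij
    set n := (j - i - 1).toNat with hn
    have he : j = i + ((n : ℤ) + 1) := by omega
    have := (key n i).1
    rw [← he] at this
    linarith
  · intro i j hij
    set n := (j - i - 1).toNat with hn
    have he : j = i + ((n : ℤ) + 1) := by omega
    have he2 : j - 1 = i + (n : ℤ) := by omega
    have := (key n i).2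
    rw [← he, ← he2] at this
    exact this
end

section
/- If s_0 = 2, s_1 ≥ 2 are reals and s_{k+1} = s_1·s_k − s_{k−1} for k ≥ 1, then s_k ≥ 2 for all k ≥ 0. -/
open Real

/-- If s_0 = 2, s_1 ≥ 2 and s_{k+1} = s_1 s_k − s_{k-1}, then s_k ≥ 2 for all k. -/
theorem growth_coefficients_ge_two (s : ℕ → ℝ) (h0 : s 0 = 2) (h1 : 2 ≤ s 1)
    (hrec : ∀ k : ℕ, 1 ≤ k → s (k + 1) = s 1 * s k - s (k - 1)) :
    ∀ k : ℕ, 2 ≤ s k := by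
  have key : ∀ k : ℕ, 2 ≤ s k ∧ s k ≤ s (k + 1) := by
    intro k
    induction k with
    | zero => exact ⟨le_of_eq h0.symm, h0 ▸ h1⟩
    | succ n ih =>
      obtain ⟨h2, hmono⟩ := ih
      have h3 : 2 ≤ s (n + 1) := le_trans h2 hmono
      refine ⟨h3, ?_⟩
      have := hrec (n + 1) (Nat.le_add_left 1 n)
      simp only [Nat.add_sub_cancel] at this
      nlinarith
  exact fun k => (key k).1
end

section
/- A finite frieze pattern of width p−3 is produced by the constant quiddity value λ_p: if m_{i,j} := U_{j−i−1}(λ_p) for 0 ≤ j−i ≤ p, then m_{i,i}=0, m_{i,i+1}=1, all entries m_{i,j} with i+1 ≤ j ≤ i+p−1 are positive, m_{i,i+p−1} = 1, and m_{i,i+p} = 0. -/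
open Real

lemma chebU_sin (θ : ℝ) (k : ℤ) (hk : 0 ≤ k) :
    chebU (k - 1) (2 * Real.cos θ) * Real.sin θ = Real.sin (k * θ) := by
  have h0 : (0:ℤ) ≤ k - 1 + 1 := by omega
  rw [chebU, if_pos h0]
  have ht : (k - 1 + 1).toNat = k.toNat := by omega
  rw [ht, chebAux_sin θ k.toNat]
  congr 2
  exact_mod_cast Int.toNat_of_nonneg hk

/-- The constant quiddity value lambda_p produces a finite frieze pattern of width p−3:
boundary rows of 0's and 1's, positive entries in between, with m_{i,i+p-1} = 1 and
m_{i,i+p} = 0. -/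
theorem constant_lambda_p_finite_frieze (p : ℤ) (hp : 3 ≤ p) (m : ℤ → ℤ → ℝ)
    (hm : ∀ i j : ℤ, m i j = chebU (j - i - 1) (2 * Real.cos (Real.pi / p))) :
    (∀ i : ℤ, m i i = 0) ∧ (∀ i : ℤ, m i (i + 1) = 1) ∧
    (∀ i j : ℤ, i + 1 ≤ j → j ≤ i + p - 1 → 0 < m i j) ∧
    (∀ i : ℤ, m i (i + p - 1) = 1) ∧ (∀ i : ℤ, m i (i + p) = 0) := by
  set θ := Real.pi / p with hθ
  have hp1 : (1:ℝ) < (p:ℝ) := by exact_mod_cast (by omega : (1:ℤ) < p)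
  have hppos : (0:ℝ) < (p:ℝ) := by linarith
  have hθpos : 0 < θ := div_pos Real.pi_pos hppos
  have hθlt : θ < Real.pi := by
    rw [hθ, div_lt_iff₀ hppos]
    nlinarith [Real.pi_pos]
  have hsin : 0 < Real.sin θ := Real.sin_pos_of_pos_of_lt_pi hθpos hθlt
  have hsne : Real.sin θ ≠ 0 := ne_of_gt hsin
  have key : ∀ (i j k : ℤ), 0 ≤ k → j - i = k →
      m i j * Real.sin θ = Real.sin ((k : ℝ) * θ) := by
    intro i j k hk hjk
    rw [hm]
    have : j - i - 1 = k - 1 := by omega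
    rw [this]
    exact chebU_sin θ k hk
  have hpθ : (p : ℝ) * θ = Real.pi := by
    rw [hθ]; field_simp
  refine ⟨?_, ?_, ?_, ?_, ?_⟩
  · intro i
    have h := key i i 0 le_rfl (by ring)
    simp at h
    rcases h with h | h
    · exact h
    · exact absurd h hsne
  · intro i
    have h := key i (i+1) 1 (by norm_num) (by ring)
    push_cast at h
    rw [one_mul] at h
    exact mul_right_cancel₀ hsne (by rw [h, one_mul])
  · intro i j h1 h2
    set k := j - i with hk
    have hkey := key i j k (by omega) rfl
    have hkpos : (0:ℝ) < (k:ℝ) := by exact_mod_cast (by omega : (0:ℤ) < k)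
    have hkle : (k:ℝ) ≤ (p:ℝ) - 1 := by exact_mod_cast (by omega : k ≤ p - 1)
    have hlt : (k:ℝ) * θ < Real.pi := by
      rw [← hpθ]
      have : (k:ℝ) < (p:ℝ) := by linarith
      exact mul_lt_mul_of_pos_right this hθpos
    have hspos : 0 < Real.sin ((k:ℝ) * θ) :=
      Real.sin_pos_of_pos_of_lt_pi (by positivity) hlt
    rw [← hkey] at hspos
    by_contra hcon
    push_neg at hcon
    nlinarith
  · intro i
    have h := key i (i + p - 1) (p - 1) (by omega) (by ring)
    have : ((p - 1 : ℤ) : ℝ) * θ = Real.pi - θ := by push_cast; linarith [hpθ]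
    rw [this, Real.sin_pi_sub] at h
    exact mul_right_cancel₀ hsne (by rw [h, one_mul])
  · intro i
    have h := key i (i + p) p (by omega) (by ring)
    rw [hpθ, Real.sin_pi] at h
    rcases mul_eq_zero.1 h with h | h
    · exact h
    · exact absurd h hsne
end

section
/- For integers p ≥ 3, q ≥ 3, the 2-periodic frieze pattern with quiddity cycle (λ_p + λ_q, λ_p + λ_q) (i.e., constant quiddity value λ_p + λ_q) has all entries positive, since λ_p + λ_q ≥ 2. -/
open Real

lemma cos_half_le (p : ℤ) (hp : 3 ≤ p) : (1:ℝ)/2 ≤ Real.cos (Real.pi / p) := by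
  have hp' : (3:ℝ) ≤ (p:ℝ) := by exact_mod_cast hp
  have hppos : (0:ℝ) < (p:ℝ) := by linarith
  have h1 : Real.pi / p ≤ Real.pi / 3 := by
    apply div_le_div_of_nonneg_left Real.pi_pos.le (by linarith) hp'
  have h2 : Real.cos (Real.pi / 3) ≤ Real.cos (Real.pi / p) := by
    apply Real.cos_le_cos_of_nonneg_of_le_pi
    · positivity
    · linarith [Real.pi_pos]
    · exact h1
  rwa [Real.cos_pi_div_three] at h2

lemma key_growth (a : ℝ) (ha : 2 ≤ a) (m : ℤ → ℤ → ℝ) (i : ℤ)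
    (h0 : m i i = 0) (h1 : m i (i + 1) = 1)
    (hrec : ∀ j : ℤ, i + 2 ≤ j → m i j = a * m i (j - 1) - m i (j - 2)) :
    ∀ n : ℕ, 0 ≤ m i (i + n) ∧ m i (i + n) + 1 ≤ m i (i + n + 1) := by
  intro n
  induction n with
  | zero => simp [h0, h1]
  | succ k ih =>
    obtain ⟨hnn, hstep⟩ := ih
    have ecast : i + ((k+1:ℕ):ℤ) = i + (k:ℤ) + 1 := by push_cast; ring
    rw [ecast]
    constructor
    · linarith
    · have hr := hrec (i + (k:ℤ) + 2) (by omega)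
      have e2 : i + (k:ℤ) + 2 - 1 = i + (k:ℤ) + 1 := by ring
      have e3 : i + (k:ℤ) + 2 - 2 = i + (k:ℤ) := by ring
      rw [e2, e3] at hr
      rw [show i + (k:ℤ) + 1 + 1 = i + (k:ℤ) + 2 by ring, hr]
      have : 0 ≤ m i (i + (k:ℤ) + 1) := by linarith
      nlinarith

/-- For p, q ≥ 3, lambda_p + lambda_q ≥ 2, so the frieze pattern with constant quiddity
value lambda_p + lambda_q has all entries positive. -/
theorem two_lambda_quiddity_positive (p q : ℤ) (hp : 3 ≤ p) (hq : 3 ≤ q)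
    (m : ℤ → ℤ → ℝ)
    (h0 : ∀ i : ℤ, m i i = 0) (h1 : ∀ i : ℤ, m i (i + 1) = 1)
    (hrec : ∀ i j : ℤ, i + 2 ≤ j →
      m i j = (2 * Real.cos (Real.pi / p) + 2 * Real.cos (Real.pi / q)) * m i (j - 1)
        - m i (j - 2)) :
    2 ≤ 2 * Real.cos (Real.pi / p) + 2 * Real.cos (Real.pi / q) ∧
    ∀ i j : ℤ, i < j → 0 < m i j := by
  have ha : 2 ≤ 2 * Real.cos (Real.pi / p) + 2 * Real.cos (Real.pi / q) := by
    have := cos_half_le p hp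
    have := cos_half_le q hq
    linarith
  refine ⟨ha, fun i j hij => ?_⟩
  have hk := key_growth _ ha m i (h0 i) (h1 i) (fun j hj => hrec i j hj)
  set n : ℕ := (j - i - 1).toNat with hn
  have hj : j = i + (n:ℤ) + 1 := by omega
  obtain ⟨hnn, hstep⟩ := hk n
  rw [hj]
  linarith
end
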